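/- For a Poisson distribution with parameter α² (α > 0 real), the probabilities p_l = e^{-α²} α^{2l}/l! satisfy, for l in the range |l - α²| ≤ R·α with R = o(α^{1/3}) as α → ∞, the expansion p_l = (e^{-s²/2}/(√(2π)·α))·[1 + a₁/α + a₂/α² + O(s⁹/α³)], where s = (l - α²)/α, a₁ = (s³ - 3s)/6, and a₂ = (s⁶ - 12s⁴ + 27s² - 6)/72. -/

import Mathlib

open Filter Real
open scoped Topology
set_option maxHeartbeats 4000000


/-- Taylor bound for `log(1+u)` to 4 terms. -/
lemma log_taylor4 {u : ℝ} (hu : |u| ≤ 1/2) :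
    |Real.log (1+u) - (u - u^2/2 + u^3/3 - u^4/4)| ≤ 2 * |u|^5 := by
  have h1 : |(-u : ℝ)| < 1 := by rw [abs_neg]; linarith [abs_nonneg u]
  have e : Real.log (1+u) - (u - u^2/2 + u^3/3 - u^4/4)
      = (∑ i ∈ Finset.range 4, (-u)^(i+1)/(i+1)) + Real.log (1 - (-u)) := by
    simp only [Finset.sum_range_succ, Finset.sum_range_zero]
    push_cast
    ring_nf
  rw [e]
  refine (Real.abs_log_sub_add_sum_range_le h1 4).trans ?_
  rw [abs_neg]
  have h5 : (0:ℝ) ≤ |u|^5 := by positivity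
  have h6 : (1:ℝ)/2 ≤ 1 - |u| := by linarith
  rw [div_le_iff₀ (by linarith [abs_nonneg u] : (0:ℝ) < 1 - |u|)]
  have h7 : |u|^(4+1) = |u|^5 := by norm_num
  rw [h7]
  nlinarith [abs_nonneg u]

/-- artanh-type bound. -/
lemma log_ratio_bound {t : ℝ} (h0 : 0 < t) (h1 : t ≤ 1/3) :
    |Real.log (1+t) - Real.log (1-t) - (2*t + 2*t^3/3)| ≤ 3*t^5 := by
  have ha : |(-t : ℝ)| < 1 := by rw [abs_neg, abs_of_pos h0]; linarith
  have hb : |t| < 1 := by rw [abs_of_pos h0]; linarith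
  have A := Real.abs_log_sub_add_sum_range_le ha 4
  have B := Real.abs_log_sub_add_sum_range_le hb 4
  rw [abs_neg, abs_of_pos h0] at A
  rw [abs_of_pos h0] at B
  have eA : (∑ i ∈ Finset.range 4, (-t)^(i+1)/(i+1)) + Real.log (1 - (-t))
      = Real.log (1+t) - (t - t^2/2 + t^3/3 - t^4/4) := by
    simp only [Finset.sum_range_succ, Finset.sum_range_zero]
    push_cast; ring_nf
  have eB : (∑ i ∈ Finset.range 4, t^(i+1)/(i+1)) + Real.log (1 - t)
      = Real.log (1-t) + (t + t^2/2 + t^3/3 + t^4/4) := by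
    simp only [Finset.sum_range_succ, Finset.sum_range_zero]
    push_cast; ring_nf
  rw [eA] at A
  rw [eB] at B
  have key : Real.log (1+t) - Real.log (1-t) - (2*t + 2*t^3/3)
      = (Real.log (1+t) - (t - t^2/2 + t^3/3 - t^4/4))
        - (Real.log (1-t) + (t + t^2/2 + t^3/3 + t^4/4)) := by ring
  rw [key]
  refine (abs_sub _ _).trans ?_
  have ht5 : (0:ℝ) < t^5 := by positivity
  have h23 : (2:ℝ)/3 ≤ 1 - t := by linarith
  have hd : t^5/(1-t) ≤ 3/2 * t^5 := by
    rw [div_le_iff₀ (by linarith)]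
    nlinarith
  have h7 : t^(4+1) = t^5 := by norm_num
  rw [h7] at A B
  linarith [A, B, hd]

noncomputable def dSt (n : ℕ) : ℝ :=
  Real.log (Nat.factorial n) - ((n:ℝ) + 1/2) * Real.log n + n

lemma dSt_diff {n : ℕ} (hn : 1 ≤ n) :
    dSt n - dSt (n+1) = ((n:ℝ) + 1/2) * (Real.log ((n:ℝ)+1) - Real.log n) - 1 := by
  have h0 : (0:ℝ) < n := by exact_mod_cast hn
  have hf : (0:ℝ) < (Nat.factorial n : ℝ) := by exact_mod_cast n.factorial_pos
  have e : Real.log (Nat.factorial (n+1)) = Real.log ((n:ℝ)+1) + Real.log (Nat.factorial n) := by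
    rw [Nat.factorial_succ]
    push_cast
    rw [Real.log_mul (by linarith) (by linarith)]
  simp only [dSt, e]
  push_cast
  ring

lemma dd_helper {t x : ℝ} (hx : x + 1/2 = 1/(2*t)) (h0 : 0 < t) (h3 : t ≤ 1/3) :
    |(x + 1/2) * (Real.log (1+t) - Real.log (1-t)) - 1 - t^2/3| ≤ 3/2 * t^4 := by
  have key := log_ratio_bound h0 h3
  have e3 : (x + 1/2) * (Real.log (1+t) - Real.log (1-t)) - 1 - t^2/3
      = 1/(2*t) * ((Real.log (1+t) - Real.log (1-t)) - (2*t + 2*t^3/3)) := by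
    rw [hx]
    field_simp
    ring
  rw [e3, abs_mul, abs_of_pos (by positivity : (0:ℝ) < 1/(2*t))]
  have h2 : 1/(2*t) * |Real.log (1+t) - Real.log (1-t) - (2*t + 2*t^3/3)| ≤ 1/(2*t) * (3*t^5) := by
    apply mul_le_mul_of_nonneg_left key (by positivity)
  refine h2.trans (le_of_eq ?_)
  field_simp

lemma dSt_diff_bound {n : ℕ} (hn : 1 ≤ n) :
    |dSt n - dSt (n+1) - 1/(3*(2*(n:ℝ)+1)^2)| ≤ 3/2 * (1/(2*(n:ℝ)+1)^4) := by
  have h0 : (0:ℝ) < n := by exact_mod_cast hn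
  have h1 : (1:ℝ) ≤ n := by exact_mod_cast hn
  have hApos : (0:ℝ) < 2*(n:ℝ)+1 := by linarith
  have htpos : (0:ℝ) < 1/(2*(n:ℝ)+1) := by positivity
  have ht3 : 1/(2*(n:ℝ)+1) ≤ 1/3 := by
    rw [div_le_div_iff₀ hApos (by norm_num)]
    linarith
  have hx : (n:ℝ) + 1/2 = 1/(2*(1/(2*(n:ℝ)+1))) := by
    field_simp
  have key := dd_helper hx htpos ht3
  have hlog : Real.log ((n:ℝ)+1) - Real.log n
      = Real.log (1+1/(2*(n:ℝ)+1)) - Real.log (1-1/(2*(n:ℝ)+1)) := by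
    have e1 : (1:ℝ)+1/(2*(n:ℝ)+1) = ((n:ℝ)+1) * (2/(2*(n:ℝ)+1)) := by
      field_simp
      ring
    have e2 : (1:ℝ)-1/(2*(n:ℝ)+1) = (n:ℝ) * (2/(2*(n:ℝ)+1)) := by
      field_simp
      ring
    rw [e1, e2, Real.log_mul (by linarith) (by positivity),
      Real.log_mul (by linarith) (by positivity)]
    ring
  rw [dSt_diff hn, hlog]
  have e4 : ((n:ℝ) + 1/2) * (Real.log (1+1/(2*(n:ℝ)+1)) - Real.log (1-1/(2*(n:ℝ)+1))) - 1
        - 1/(3*(2*(n:ℝ)+1)^2)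
      = ((n:ℝ) + 1/2) * (Real.log (1+1/(2*(n:ℝ)+1)) - Real.log (1-1/(2*(n:ℝ)+1))) - 1
        - (1/(2*(n:ℝ)+1))^2/3 := by
    congr 1
    field_simp
  rw [e4]
  refine key.trans (le_of_eq ?_)
  field_simp

lemma dSt_eq_stirling {n : ℕ} (hn : 1 ≤ n) :
    dSt n = Real.log (Stirling.stirlingSeq n) + Real.log 2 / 2 := by
  have h0 : (0:ℝ) < n := by exact_mod_cast hn
  rw [Stirling.log_stirlingSeq_formula, dSt]
  rw [Real.log_mul (by norm_num) (by positivity), Real.log_div (by positivity) (by positivity),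
    Real.log_exp]
  ring

lemma dSt_tendsto : Tendsto dSt atTop (𝓝 (Real.log (2*π)/2)) := by
  have hst := Stirling.tendsto_stirlingSeq_sqrt_pi
  have hlog : Tendsto (fun n => Real.log (Stirling.stirlingSeq n)) atTop
      (𝓝 (Real.log (Real.sqrt π))) := hst.log (by positivity)
  have h2 : Tendsto (fun n => Real.log (Stirling.stirlingSeq n) + Real.log 2 / 2) atTop
      (𝓝 (Real.log (Real.sqrt π) + Real.log 2 / 2)) := hlog.add_const _
  have he : Real.log (Real.sqrt π) + Real.log 2 / 2 = Real.log (2*π)/2 := by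
    rw [Real.log_sqrt Real.pi_pos.le, Real.log_mul (by norm_num) Real.pi_ne_zero]
    ring
  rw [he] at h2
  apply h2.congr'
  filter_upwards [eventually_ge_atTop 1] with n hn
  exact (dSt_eq_stirling hn).symm

lemma tendsto_aux (a b : ℝ) (ha : 0 < a) : Tendsto (fun n : ℕ => 1/(a*(n:ℝ)+b)) atTop (𝓝 0) := by
  simp only [one_div]
  apply Filter.Tendsto.comp tendsto_inv_atTop_zero
  apply tendsto_atTop_add_const_right
  exact (tendsto_natCast_atTop_atTop (R := ℝ)).const_mul_atTop ha

/-- lower bound: `dSt n ≥ log(2π)/2 + 1/(6(2n+1))` for `n ≥ 2`. -/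
lemma dSt_lower {n : ℕ} (hn : 2 ≤ n) :
    Real.log (2*π)/2 + 1/(6*(2*(n:ℝ)+1)) ≤ dSt n := by
  set A : ℕ → ℝ := fun m => dSt m - 1/(6*(2*(m:ℝ)+1)) with hA
  have hmono : ∀ m : ℕ, 2 ≤ m → A (m+1) ≤ A m := by
    intro m hm
    have h2 : (2:ℝ) ≤ m := by exact_mod_cast hm
    have hd := dSt_diff_bound (le_trans one_le_two hm)
    rw [abs_le] at hd
    have hkey : 1/(6*(2*(m:ℝ)+1)) - 1/(6*(2*((m:ℝ)+1)+1))
        ≤ 1/(3*(2*(m:ℝ)+1)^2) - 3/2 * (1/(2*(m:ℝ)+1)^4) := by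
      have hident : (1/(3*(2*(m:ℝ)+1)^2) - 3/2 * (1/(2*(m:ℝ)+1)^4))
          - (1/(6*(2*(m:ℝ)+1)) - 1/(6*(2*((m:ℝ)+1)+1)))
          = (4*(2*(m:ℝ)+1)^2 - 9*(2*(m:ℝ)+1) - 18) / (6*(2*(m:ℝ)+1)^4*(2*(m:ℝ)+3)) := by
        field_simp
        ring
      nlinarith [hident, div_nonneg (by nlinarith : (0:ℝ) ≤ 4*(2*(m:ℝ)+1)^2 - 9*(2*(m:ℝ)+1) - 18)
        (by positivity : (0:ℝ) ≤ 6*(2*(m:ℝ)+1)^4*(2*(m:ℝ)+3))]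
    simp only [hA]
    push_cast
    linarith [hd.1]
  have hAle : ∀ m, n ≤ m → A m ≤ A n := by
    intro m hm
    induction m, hm using Nat.le_induction with
    | base => exact le_refl _
    | succ m hm ih => exact le_trans (hmono m (le_trans hn hm)) ih
  have hAtend : Tendsto A atTop (𝓝 (Real.log (2*π)/2)) := by
    have := dSt_tendsto.sub (tendsto_aux 12 6 (by norm_num))
    simp only [sub_zero] at this
    apply this.congr
    intro m
    simp only [hA]
    ring_nf
  have : Real.log (2*π)/2 ≤ A n :=
    le_of_tendsto hAtend (eventually_atTop.2 ⟨n, hAle⟩)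
  simp only [hA] at this
  linarith

/-- upper bound: `dSt n ≤ log(2π)/2 + 1/(12n) + 1/(16n²)` for `n ≥ 2`. -/
lemma dSt_upper {n : ℕ} (hn : 2 ≤ n) :
    dSt n ≤ Real.log (2*π)/2 + 1/(12*(n:ℝ)) + 1/(16*(n:ℝ)^2) := by
  set B : ℕ → ℝ := fun m => dSt m - 1/(12*(m:ℝ)) - 1/(16*(m:ℝ)^2) with hB
  have hmono : ∀ m : ℕ, 2 ≤ m → B m ≤ B (m+1) := by
    intro m hm
    have h2 : (2:ℝ) ≤ m := by exact_mod_cast hm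
    have hd := dSt_diff_bound (le_trans one_le_two hm)
    rw [abs_le] at hd
    have hkey : 1/(3*(2*(m:ℝ)+1)^2) + 3/2 * (1/(2*(m:ℝ)+1)^4)
        ≤ (1/(12*(m:ℝ)) - 1/(12*((m:ℝ)+1))) + (1/(16*(m:ℝ)^2) - 1/(16*((m:ℝ)+1)^2)) := by
      have hident : ((1/(12*(m:ℝ)) - 1/(12*((m:ℝ)+1))) + (1/(16*(m:ℝ)^2) - 1/(16*((m:ℝ)+1)^2)))
          - (1/(3*(2*(m:ℝ)+1)^2) + 3/2 * (1/(2*(m:ℝ)+1)^4))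
          = (96*(m:ℝ)^5 + 184*(m:ℝ)^4 + 128*(m:ℝ)^3 + 68*(m:ℝ)^2 + 34*(m:ℝ) + 3)
            / (48*(m:ℝ)^2*((m:ℝ)+1)^2*(2*(m:ℝ)+1)^4) := by
        field_simp
        ring
      nlinarith [hident,
        div_nonneg (by positivity : (0:ℝ) ≤ 96*(m:ℝ)^5 + 184*(m:ℝ)^4 + 128*(m:ℝ)^3 + 68*(m:ℝ)^2 + 34*(m:ℝ) + 3)
          (by positivity : (0:ℝ) ≤ 48*(m:ℝ)^2*((m:ℝ)+1)^2*(2*(m:ℝ)+1)^4)]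
    simp only [hB]
    push_cast
    linarith [hd.2]
  have hBge : ∀ m, n ≤ m → B n ≤ B m := by
    intro m hm
    induction m, hm using Nat.le_induction with
    | base => exact le_refl _
    | succ m hm ih => exact le_trans ih (hmono m (le_trans hn hm))
  have hBtend : Tendsto B atTop (𝓝 (Real.log (2*π)/2)) := by
    have h1 : Tendsto (fun n : ℕ => 1/(12*(n:ℝ))) atTop (𝓝 0) := by
      simpa using tendsto_aux 12 0 (by norm_num)
    have h2 : Tendsto (fun n : ℕ => 1/(16*(n:ℝ)^2)) atTop (𝓝 0) := by
      simp only [one_div]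
      apply Filter.Tendsto.comp tendsto_inv_atTop_zero
      apply tendsto_atTop_mono _ (tendsto_natCast_atTop_atTop (R := ℝ))
      intro n
      rcases Nat.eq_zero_or_pos n with h | h
      · simp [h]
      · have : (1:ℝ) ≤ n := by exact_mod_cast h
        nlinarith
    have h3 := (dSt_tendsto.sub h1).sub h2
    simp only [sub_zero] at h3
    exact h3.congr (fun m => by simp only [hB])
  have : B n ≤ Real.log (2*π)/2 :=
    ge_of_tendsto hBtend (eventually_atTop.2 ⟨n, hBge⟩)
  simp only [hB] at this
  linarith

lemma stirling_log_bound {n : ℕ} (hn : 2 ≤ n) :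
    |Real.log (Nat.factorial n)
      - (((n:ℝ) + 1/2) * Real.log n - n + Real.log (2*π)/2 + 1/(12*(n:ℝ)))|
      ≤ 1/(8*(n:ℝ)^2) := by
  have h2 : (2:ℝ) ≤ n := by exact_mod_cast hn
  have hl := dSt_lower hn
  have hu := dSt_upper hn
  have e : Real.log (Nat.factorial n)
      - (((n:ℝ) + 1/2) * Real.log n - n + Real.log (2*π)/2 + 1/(12*(n:ℝ)))
      = dSt n - Real.log (2*π)/2 - 1/(12*(n:ℝ)) := by
    simp only [dSt]; ring
  rw [e, abs_le]
  constructor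
  · have hkey : 1/(12*(n:ℝ)) - 1/(6*(2*(n:ℝ)+1)) ≤ 1/(8*(n:ℝ)^2) := by
      have hident : 1/(8*(n:ℝ)^2) - (1/(12*(n:ℝ)) - 1/(6*(2*(n:ℝ)+1)))
          = (4*(n:ℝ)+3)/(24*(n:ℝ)^2*(2*(n:ℝ)+1)) := by
        field_simp
        ring
      nlinarith [hident, div_nonneg (by linarith : (0:ℝ) ≤ 4*(n:ℝ)+3)
        (by positivity : (0:ℝ) ≤ 24*(n:ℝ)^2*(2*(n:ℝ)+1))]
    linarith
  · have hkey : 1/(16*(n:ℝ)^2) ≤ 1/(8*(n:ℝ)^2) := by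
      rw [div_le_div_iff₀ (by positivity) (by positivity)]
      nlinarith
    linarith

lemma pow_le_add {x : ℝ} (hx : 0 ≤ x) {k m : ℕ} (hk : k ≤ m) : x^k ≤ 1 + x^m := by
  rcases le_total x 1 with h|h
  · have h1 : x^k ≤ 1 := pow_le_one₀ hx h
    have h2 : (0:ℝ) ≤ x^m := by positivity
    linarith
  · have h1 : x^k ≤ x^m := pow_le_pow_right₀ h hk
    linarith

lemma abs5 (a b c d e : ℝ) : |a+b+c-d-e| ≤ |a|+|b|+|c|+|d|+|e| := by
  have h1 : |a+b+c-d-e| ≤ |a+b+c-d| + |e| := abs_sub _ _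
  have h2 : |a+b+c-d| ≤ |a+b+c| + |d| := abs_sub _ _
  have h3 : |a+b+c| ≤ |a+b| + |c| := abs_add_le _ _
  have h4 : |a+b| ≤ |a| + |b| := abs_add_le _ _
  linarith

/-- standalone bound for the remainder `r`. -/
lemma est_r (α s X E ε l : ℝ)
    (hX : X = |s|) (hα : 100 ≤ α)
    (hs3 : X^3 ≤ α/1000) (hs9 : X^9 ≤ α^3/10^9) (hs1 : X ≤ α/10)
    (hl_lo : 9/10*α^2 ≤ l) (hl_hi : l ≤ 11/10*α^2)
    (hEb : |E| ≤ 1/(8*l^2))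
    (hεb : |ε| ≤ 2*X^5/α^5) :
    |(s^5/4 - s^3/6)/α^3 + s^4/(8*α^4) + s/(12*α*l) - E - (l+1/2)*ε|
      ≤ 5*(1+X^9)/α^3 := by
  have hαpos : (0:ℝ) < α := by linarith
  have hXnn : 0 ≤ X := by rw [hX]; exact abs_nonneg s
  have hα3 : (10:ℝ)^6 ≤ α^3 := by
    calc (10:ℝ)^6 = 100^3 := by norm_num
      _ ≤ α^3 := pow_le_pow_left₀ (by norm_num) hα 3
  have hα2 : (10000:ℝ) ≤ α^2 := by nlinarith
  have hlpos : (0:ℝ) < l := by nlinarith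
  have hα43 : 100*α^3 ≤ α^4 := by nlinarith [pow_nonneg hαpos.le 3]
  have hl_sq : (81/100)*α^4 ≤ l^2 := by nlinarith [mul_le_mul hl_lo hl_lo (by positivity) (by positivity)]
  have hαl : 2*α^3 ≤ 12*α*l := by
    nlinarith [mul_le_mul_of_nonneg_left hl_lo (show (0:ℝ) ≤ 12*α by positivity)]
  have k5 : X^5 ≤ 1+X^9 := pow_le_add hXnn (by norm_num)
  have k4 : X^4 ≤ 1+X^9 := pow_le_add hXnn (by norm_num)
  have k3 : X^3 ≤ 1+X^9 := pow_le_add hXnn (by norm_num)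
  have k1 : X ≤ 1+X^9 := by
    have := pow_le_add hXnn (show 1 ≤ 9 by norm_num) (x := X)
    rwa [pow_one] at this
  have h1 : |(s^5/4 - s^3/6)/α^3| ≤ (1/2)*(1+X^9)/α^3 := by
    rw [abs_div, abs_of_pos (by positivity : (0:ℝ) < α^3)]
    gcongr
    calc |s^5/4 - s^3/6| ≤ |s^5/4| + |s^3/6| := abs_sub _ _
      _ = X^5/4 + X^3/6 := by
          rw [abs_div, abs_div, abs_pow, abs_pow, ← hX]; norm_num
      _ ≤ (1/2)*(1+X^9) := by linarith
  have h2 : |s^4/(8*α^4)| ≤ (1/8)*(1+X^9)/α^3 := by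
    rw [abs_div, abs_of_pos (show (0:ℝ) < 8*α^4 by positivity), abs_pow, ← hX]
    rw [div_le_div_iff₀ (by positivity) (by positivity)]
    have f1 : X^4*α^3 ≤ (1+X^9)*α^3 :=
      mul_le_mul_of_nonneg_right k4 (by positivity)
    have f2 : (0:ℝ) ≤ (α-1)*(1+X^9)*α^3 :=
      mul_nonneg (mul_nonneg (by linarith) (by positivity)) (by positivity)
    nlinarith [f1, f2]
  have h3 : |s/(12*α*l)| ≤ (1/2)*(1+X^9)/α^3 := by
    rw [abs_div, abs_of_pos (by positivity : (0:ℝ) < 12*α*l), ← hX]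
    calc X/(12*α*l) ≤ X/(2*α^3) := by
          gcongr
      _ ≤ (1+X^9)/(2*α^3) := by gcongr
      _ = (1/2)*(1+X^9)/α^3 := by ring
  have h4 : |E| ≤ (1/2)*(1+X^9)/α^3 := by
    calc |E| ≤ 1/(8*l^2) := hEb
      _ ≤ 1/(2*α^3) := by
          apply one_div_le_one_div_of_le (by positivity)
          linarith [hl_sq, hα43, hα3]
      _ ≤ (1+X^9)/(2*α^3) := by gcongr; linarith [pow_nonneg hXnn 9]
      _ = (1/2)*(1+X^9)/α^3 := by ring
  have h5 : |(l+1/2)*ε| ≤ 3*(1+X^9)/α^3 := by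
    rw [abs_mul, abs_of_pos (by linarith : (0:ℝ) < l+1/2)]
    calc (l+1/2)*|ε| ≤ (6/5*α^2)*(2*X^5/α^5) := by
          apply mul_le_mul (by linarith) hεb (abs_nonneg ε) (by positivity)
      _ = (12/5*X^5*α^2)/α^5 := by ring
      _ = 12/5*X^5/α^3 := by
          rw [div_eq_div_iff (by positivity) (by positivity)]
          ring
      _ ≤ 3*(1+X^9)/α^3 := by gcongr ?_/α^3; linarith
  have htri := abs5 ((s^5/4 - s^3/6)/α^3) (s^4/(8*α^4)) (s/(12*α*l)) E ((l+1/2)*ε)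
  have hsum : (1/2)*(1+X^9)/α^3 + (1/8)*(1+X^9)/α^3 + (1/2)*(1+X^9)/α^3 + (1/2)*(1+X^9)/α^3
      + 3*(1+X^9)/α^3 ≤ 5*(1+X^9)/α^3 := by
    rw [← add_div, ← add_div, ← add_div, ← add_div]
    gcongr ?_/α^3
    linarith [pow_nonneg hXnn 9]
  linarith

/-- standalone main estimate. -/
lemma est_main (α s X E ε T l : ℝ)
    (hX : X = |s|) (hα : 100 ≤ α)
    (hs3 : X^3 ≤ α/1000) (hs9 : X^9 ≤ α^3/10^9) (hs1 : X ≤ α/10)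
    (hl_lo : 9/10*α^2 ≤ l) (hl_hi : l ≤ 11/10*α^2)
    (hEb : |E| ≤ 1/(8*l^2))
    (hεb : |ε| ≤ 2*X^5/α^5)
    (hr_eq : T - ((s^3-3*s)/6/α + (-s^4/12 + s^2/4 - 1/12)/α^2)
      = (s^5/4 - s^3/6)/α^3 + s^4/(8*α^4) + s/(12*α*l) - E - (l+1/2)*ε) :
    |Real.exp T - (1 + (s^3-3*s)/6/α
        + (s^6 - 12*s^4 + 27*s^2 - 6)/72/α^2)| ≤ 10000*(1+X^9)/α^3 := by
  have hαpos : (0:ℝ) < α := by linarith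
  have hXnn : 0 ≤ X := by rw [hX]; exact abs_nonneg s
  have hα3 : (10:ℝ)^6 ≤ α^3 := by
    calc (10:ℝ)^6 = 100^3 := by norm_num
      _ ≤ α^3 := pow_le_pow_left₀ (by norm_num) hα 3
  have hα2 : (10000:ℝ) ≤ α^2 := by nlinarith
  have hXa : X^4 ≤ α^2/10^4 := by
    calc X^4 = X^3*X := by ring
      _ ≤ (α/1000)*(α/10) := mul_le_mul hs3 hs1 hXnn (by positivity)
      _ = α^2/10^4 := by ring
  have hX2 : X^2 ≤ α^2/100 := by
    calc X^2 = X*X := by ring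
      _ ≤ (α/10)*(α/10) := mul_le_mul hs1 hs1 hXnn (by positivity)
      _ = α^2/100 := by ring
  have hrb : |T - ((s^3-3*s)/6/α + (-s^4/12 + s^2/4 - 1/12)/α^2)| ≤ 5*(1+X^9)/α^3 := by
    rw [hr_eq]
    exact est_r α s X E ε l hX hα hs3 hs9 hs1 hl_lo hl_hi hEb hεb
  -- pieces of T₀
  have habs1 : |s^3-3*s| ≤ X^3 + 3*X := by
    calc |s^3-3*s| ≤ |s^3| + |3*s| := abs_sub _ _
      _ = X^3 + 3*X := by rw [abs_pow, abs_mul, ← hX]; norm_num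
  have habs2 : |(-s^4/12 + s^2/4 - 1/12)| ≤ X^4/12 + X^2/4 + 1/12 := by
    calc |(-s^4/12 + s^2/4) - 1/12| ≤ |(-s^4/12) + s^2/4| + |(1:ℝ)/12| := abs_sub _ _
      _ ≤ |(-s^4/12)| + |s^2/4| + |(1:ℝ)/12| := by linarith [abs_add_le (-s^4/12) (s^2/4)]
      _ = X^4/12 + X^2/4 + 1/12 := by
          have a1 : |(-s^4/12)| = X^4/12 := by
            rw [show (-s^4/12 : ℝ) = -(s^4/12) by ring, abs_neg, abs_div, abs_pow, ← hX]
            norm_num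
          have a2 : |s^2/4| = X^2/4 := by
            rw [abs_div, abs_pow, ← hX]; norm_num
          rw [a1, a2]
          norm_num
  have e1 : |(s^3-3*s)/6/α| ≤ 4*(1+X^3)/α := by
    rw [div_div, abs_div, abs_of_pos (by positivity : (0:ℝ) < 6*α)]
    have c1 : X ≤ 1+X^3 := by
      have := pow_le_add hXnn (show 1 ≤ 3 by norm_num) (x := X)
      rwa [pow_one] at this
    calc |s^3-3*s|/(6*α) ≤ (24*(1+X^3))/(6*α) := by
          gcongr
          linarith [pow_nonneg hXnn 3]
      _ = 4*(1+X^3)/α := by ring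
  have e2 : |(-s^4/12 + s^2/4 - 1/12)/α^2| ≤ (X^4/12 + X^2/4 + 1/12)/α^2 := by
    rw [abs_div, abs_of_pos (by positivity : (0:ℝ) < α^2)]
    gcongr
  have hT0b : |(s^3-3*s)/6/α + (-s^4/12 + s^2/4 - 1/12)/α^2| ≤ 1/10 := by
    have e3 : |(s^3-3*s)/6/α| ≤ 6/100 := by
      rw [div_div, abs_div, abs_of_pos (by positivity : (0:ℝ) < 6*α),
        div_le_iff₀ (by positivity)]
      linarith [habs1, hs3, hs1]
    have e4 : (X^4/12 + X^2/4 + 1/12)/α^2 ≤ 1/100 := by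
      rw [div_le_iff₀ (by positivity)]
      linarith [hXa, hX2, hα2]
    calc |(s^3-3*s)/6/α + (-s^4/12 + s^2/4 - 1/12)/α^2|
        ≤ |(s^3-3*s)/6/α| + |(-s^4/12 + s^2/4 - 1/12)/α^2| := abs_add_le _ _
      _ ≤ 1/10 := by linarith [e2.trans e4]
  have hrsmall : 5*(1+X^9)/α^3 ≤ 1/10 := by
    rw [div_le_iff₀ (by positivity)]
    linarith [hs9, hα3]
  have hT1 : |T| ≤ 1 := by
    calc |T| = |((s^3-3*s)/6/α + (-s^4/12 + s^2/4 - 1/12)/α^2)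
        + (T - ((s^3-3*s)/6/α + (-s^4/12 + s^2/4 - 1/12)/α^2))| := by ring_nf
      _ ≤ |(s^3-3*s)/6/α + (-s^4/12 + s^2/4 - 1/12)/α^2|
          + |T - ((s^3-3*s)/6/α + (-s^4/12 + s^2/4 - 1/12)/α^2)| := abs_add_le _ _
      _ ≤ 1 := by linarith [hrb.trans hrsmall]
  -- |T| ≤ 10 (1+X^3)/α
  have hX3α : X^3 ≤ X^3*α := by nlinarith [pow_nonneg hXnn 3]
  have hX4b : X^4 ≤ X^3 * (α/10) := by
    calc X^4 = X^3*X := by ring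
      _ ≤ X^3*(α/10) := mul_le_mul_of_nonneg_left hs1 (by positivity)
  have e2' : |(-s^4/12 + s^2/4 - 1/12)/α^2| ≤ 1*(1+X^3)/α := by
    refine e2.trans ?_
    have c2 : X^2 ≤ 1+X^3 := pow_le_add hXnn (by norm_num)
    have num : X^4/12 + X^2/4 + 1/12 ≤ (1+X^3)*α := by nlinarith
    calc (X^4/12 + X^2/4 + 1/12)/α^2 ≤ ((1+X^3)*α)/α^2 := by gcongr
      _ = 1*(1+X^3)/α := by
          rw [div_eq_div_iff (by positivity) (by positivity)]
          ring
  have hX9b : X^9 ≤ X^3*α^2/10^6 := by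
    have h33 : (X^3)^2 ≤ (α/1000)^2 := pow_le_pow_left₀ (by positivity) hs3 2
    calc X^9 = (X^3)^2*X^3 := by ring
      _ ≤ (α/1000)^2*X^3 := mul_le_mul_of_nonneg_right h33 (by positivity)
      _ = X^3*α^2/10^6 := by ring
  have e3' : 5*(1+X^9)/α^3 ≤ 5*(1+X^3)/α := by
    have heq : (5*(1+X^3)*α^2)/α^3 = 5*(1+X^3)/α := by
      rw [div_eq_div_iff (by positivity) (by positivity)]
      ring
    rw [← heq]
    gcongr ?_/α^3
    nlinarith [hX9b, pow_nonneg hXnn 3, mul_nonneg (pow_nonneg hXnn 3) (sq_nonneg α)]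
  have hTle : |T| ≤ 10*(1+X^3)/α := by
    calc |T| = |((s^3-3*s)/6/α + (-s^4/12 + s^2/4 - 1/12)/α^2)
        + (T - ((s^3-3*s)/6/α + (-s^4/12 + s^2/4 - 1/12)/α^2))| := by ring_nf
      _ ≤ |(s^3-3*s)/6/α + (-s^4/12 + s^2/4 - 1/12)/α^2|
          + |T - ((s^3-3*s)/6/α + (-s^4/12 + s^2/4 - 1/12)/α^2)| := abs_add_le _ _
      _ ≤ (|(s^3-3*s)/6/α| + |(-s^4/12 + s^2/4 - 1/12)/α^2|)
          + |T - ((s^3-3*s)/6/α + (-s^4/12 + s^2/4 - 1/12)/α^2)| := by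
          linarith [abs_add_le ((s^3-3*s)/6/α) ((-s^4/12 + s^2/4 - 1/12)/α^2)]
      _ ≤ 4*(1+X^3)/α + 1*(1+X^3)/α + 5*(1+X^3)/α := by
          linarith [e1, e2', hrb.trans e3']
      _ = 10*(1+X^3)/α := by ring
  -- exp bound
  have hexp : |Real.exp T - (1 + T + T^2/2)| ≤ |T|^3 := by
    have h := Real.exp_bound hT1 (n := 3) (by norm_num)
    have hsum : ∑ m ∈ Finset.range 3, T^m/(Nat.factorial m) = 1 + T + T^2/2 := by
      rw [Finset.sum_range_succ, Finset.sum_range_succ, Finset.sum_range_one]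
      norm_num [Nat.factorial]
    rw [hsum] at h
    refine h.trans ?_
    have : (0:ℝ) ≤ |T|^3 := by positivity
    have hc : ((3:ℕ).succ : ℝ)/((Nat.factorial 3 : ℝ)*3) ≤ 1 := by norm_num [Nat.factorial]
    nlinarith
  have hcube2 : |T|^3 ≤ 8000*(1+X^9)/α^3 := by
    have hy1 : X^3 ≤ 1+X^9 := pow_le_add hXnn (by norm_num)
    have hy2 : X^6 ≤ 1+X^9 := pow_le_add hXnn (by norm_num)
    calc |T|^3 ≤ (10*(1+X^3)/α)^3 := pow_le_pow_left₀ (abs_nonneg T) hTle 3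
      _ = (1000*(1+X^3)^3)/α^3 := by rw [div_pow]; ring_nf
      _ ≤ 8000*(1+X^9)/α^3 := by
          gcongr ?_/α^3
          nlinarith [pow_nonneg hXnn 3, pow_nonneg hXnn 9, pow_nonneg hXnn 6]
  -- |T - D| ≤ (1+X^6)/α^2
  have hTD : |T - (s^3-3*s)/6/α| ≤ (1+X^6)/α^2 := by
    have hid : T - (s^3-3*s)/6/α = (-s^4/12 + s^2/4 - 1/12)/α^2
        + (T - ((s^3-3*s)/6/α + (-s^4/12 + s^2/4 - 1/12)/α^2)) := by ring
    rw [hid]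
    have k4' : X^4 ≤ 1+X^6 := pow_le_add hXnn (by norm_num)
    have k2' : X^2 ≤ 1+X^6 := pow_le_add hXnn (by norm_num)
    have hX96 : X^9 ≤ X^6*(α/1000) := by
      calc X^9 = X^6*X^3 := by ring
        _ ≤ X^6*(α/1000) := mul_le_mul_of_nonneg_left hs3 (by positivity)
    have step1 : (X^4/12 + X^2/4 + 1/12)/α^2 + 5*(1+X^9)/α^3 ≤ (1+X^6)/α^2 := by
      have hrw1 : (X^4/12 + X^2/4 + 1/12)/α^2 = ((X^4/12 + X^2/4 + 1/12)*α)/α^3 := by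
        rw [div_eq_div_iff (by positivity) (by positivity)]
        ring
      have hrw2 : (1+X^6)/α^2 = ((1+X^6)*α)/α^3 := by
        rw [div_eq_div_iff (by positivity) (by positivity)]
        ring
      rw [hrw1, hrw2, ← add_div]
      gcongr ?_/α^3
      have f1 : X^4*α ≤ (1+X^6)*α := mul_le_mul_of_nonneg_right k4' hαpos.le
      have f2 : X^2*α ≤ (1+X^6)*α := mul_le_mul_of_nonneg_right k2' hαpos.le
      have f3 : (0:ℝ) ≤ X^6*α := mul_nonneg (pow_nonneg hXnn 6) hαpos.le
      nlinarith [f1, f2, f3, hX96]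
    calc |(-s^4/12 + s^2/4 - 1/12)/α^2
        + (T - ((s^3-3*s)/6/α + (-s^4/12 + s^2/4 - 1/12)/α^2))|
        ≤ |(-s^4/12 + s^2/4 - 1/12)/α^2|
          + |T - ((s^3-3*s)/6/α + (-s^4/12 + s^2/4 - 1/12)/α^2)| := abs_add_le _ _
      _ ≤ (X^4/12 + X^2/4 + 1/12)/α^2 + 5*(1+X^9)/α^3 := by linarith [e2, hrb]
      _ ≤ (1+X^6)/α^2 := step1
  have hTpD : |T + (s^3-3*s)/6/α| ≤ 20*(1+X^3)/α := by
    calc |T + (s^3-3*s)/6/α| ≤ |T| + |(s^3-3*s)/6/α| := abs_add_le _ _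
      _ ≤ 10*(1+X^3)/α + 4*(1+X^3)/α := by linarith [hTle, e1]
      _ = 14*(1+X^3)/α := by ring
      _ ≤ 20*(1+X^3)/α := by
          gcongr ?_/α
          linarith [pow_nonneg hXnn 3]
  have hsq : |T^2 - ((s^3-3*s)/6/α)^2| ≤ 80*(1+X^9)/α^3 := by
    have hid : T^2 - ((s^3-3*s)/6/α)^2
        = (T - (s^3-3*s)/6/α)*(T + (s^3-3*s)/6/α) := by ring
    rw [hid, abs_mul]
    calc |T - (s^3-3*s)/6/α| * |T + (s^3-3*s)/6/α|
        ≤ ((1+X^6)/α^2) * (20*(1+X^3)/α) :=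
          mul_le_mul hTD hTpD (abs_nonneg _) (by positivity)
      _ = (20*(1+X^6)*(1+X^3))/α^3 := by
          rw [div_mul_div_comm, div_eq_div_iff (by positivity) (by positivity)]
          ring
      _ ≤ 80*(1+X^9)/α^3 := by
          gcongr ?_/α^3
          have hy1 : X^3 ≤ 1+X^9 := pow_le_add hXnn (by norm_num)
          have hy2 : X^6 ≤ 1+X^9 := pow_le_add hXnn (by norm_num)
          nlinarith [pow_nonneg hXnn 9, pow_nonneg hXnn 3, pow_nonneg hXnn 6]
  -- final assembly
  have hsplit : Real.exp T - (1 + (s^3-3*s)/6/α + (s^6 - 12*s^4 + 27*s^2 - 6)/72/α^2)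
      = (Real.exp T - (1 + T + T^2/2))
        + (T - ((s^3-3*s)/6/α + (-s^4/12 + s^2/4 - 1/12)/α^2))
        + (T^2 - ((s^3-3*s)/6/α)^2)/2 := by
    have hQid : (s^6 - 12*s^4 + 27*s^2 - 6)/72/α^2
        = (-s^4/12 + s^2/4 - 1/12)/α^2 + ((s^3-3*s)/6/α)^2/2 := by
      field_simp
      ring
    rw [hQid]
    ring
  rw [hsplit]
  have htri : |(Real.exp T - (1 + T + T^2/2))
        + (T - ((s^3-3*s)/6/α + (-s^4/12 + s^2/4 - 1/12)/α^2))
        + (T^2 - ((s^3-3*s)/6/α)^2)/2|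
      ≤ |Real.exp T - (1 + T + T^2/2)|
        + |T - ((s^3-3*s)/6/α + (-s^4/12 + s^2/4 - 1/12)/α^2)|
        + |(T^2 - ((s^3-3*s)/6/α)^2)/2| := by
    have := abs_add_le ((Real.exp T - (1 + T + T^2/2))
        + (T - ((s^3-3*s)/6/α + (-s^4/12 + s^2/4 - 1/12)/α^2)))
        ((T^2 - ((s^3-3*s)/6/α)^2)/2)
    have h2 := abs_add_le (Real.exp T - (1 + T + T^2/2))
        (T - ((s^3-3*s)/6/α + (-s^4/12 + s^2/4 - 1/12)/α^2))
    linarith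
  have hhalf : |(T^2 - ((s^3-3*s)/6/α)^2)/2| ≤ 40*(1+X^9)/α^3 := by
    calc |(T^2 - ((s^3-3*s)/6/α)^2)/2| = |T^2 - ((s^3-3*s)/6/α)^2|/2 := by
          rw [abs_div]; norm_num
      _ ≤ (80*(1+X^9)/α^3)/2 := by
          apply div_le_div_of_nonneg_right ?_ (by norm_num)
          · exact hsq
      _ = 40*(1+X^9)/α^3 := by ring
  have hfin : 8000*(1+X^9)/α^3 + 5*(1+X^9)/α^3 + 40*(1+X^9)/α^3 ≤ 10000*(1+X^9)/α^3 := by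
    rw [← add_div, ← add_div]
    gcongr ?_/α^3
    nlinarith [pow_nonneg hXnn 9]
  linarith [htri, hexp.trans hcube2, hrb, hhalf, hfin]
/-- Poisson distribution deviations from Gaussianity (Lemma `poisson gaussian approx`):
for `p_l = e^{-α²} α^{2l}/l!` and `l` in the window `|l - α²| ≤ R(α)·α` with `R = o(α^{1/3})`,
`p_l = (e^{-s²/2}/(√(2π)α))·[1 + a₁/α + a₂/α² + O(s⁹/α³)]` with `s = (l-α²)/α`,
`a₁ = (s³-3s)/6`, `a₂ = (s⁶-12s⁴+27s²-6)/72`, uniformly over the window. -/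
theorem poisson_gaussian_expansion
    (R : ℝ → ℝ) (hRpos : ∀ α, 0 ≤ R α)
    (hR : (fun α => R α) =o[atTop] (fun α => α ^ ((1 : ℝ) / 3))) :
    ∃ C > (0 : ℝ), ∃ α₀ : ℝ, ∀ α ≥ α₀, ∀ l : ℕ,
      |(l : ℝ) - α ^ 2| ≤ R α * α →
      |Real.exp (-α ^ 2) * α ^ (2 * l) / (Nat.factorial l : ℝ) -
          Real.exp (-(((l : ℝ) - α ^ 2) / α) ^ 2 / 2) / (Real.sqrt (2 * Real.pi) * α) *
            (1 + ((((l : ℝ) - α ^ 2) / α) ^ 3 - 3 * (((l : ℝ) - α ^ 2) / α)) / 6 / α +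
              ((((l : ℝ) - α ^ 2) / α) ^ 6 - 12 * (((l : ℝ) - α ^ 2) / α) ^ 4 +
                27 * (((l : ℝ) - α ^ 2) / α) ^ 2 - 6) / 72 / α ^ 2)|
        ≤ Real.exp (-(((l : ℝ) - α ^ 2) / α) ^ 2 / 2) / (Real.sqrt (2 * Real.pi) * α) *
            (C * (1 + |((l : ℝ) - α ^ 2) / α| ^ 9) / α ^ 3) := by
  rw [Asymptotics.isLittleO_iff] at hR
  have hev := hR (c := 1/10) (by norm_num)
  rw [eventually_atTop] at hev
  obtain ⟨M, hM⟩ := hev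
  refine ⟨10000, by norm_num, max M 100, ?_⟩
  intro α hα l hl
  have hα100 : (100:ℝ) ≤ α := le_trans (le_max_right _ _) hα
  have hαpos : (0:ℝ) < α := by linarith
  have hRα : R α ≤ α ^ ((1:ℝ)/3) / 10 := by
    have h := hM α (le_trans (le_max_left _ _) hα)
    rw [Real.norm_eq_abs, Real.norm_eq_abs, abs_of_nonneg (hRpos α),
      abs_of_nonneg (Real.rpow_nonneg hαpos.le _)] at h
    linarith
  set s : ℝ := ((l:ℝ) - α^2)/α with hs_def
  set X : ℝ := |s| with hX_def
  have hXnn : 0 ≤ X := by rw [hX_def]; exact abs_nonneg s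
  have hcube : (α ^ ((1:ℝ)/3))^(3:ℕ) = α := by
    rw [← Real.rpow_natCast (α ^ ((1:ℝ)/3)) 3, ← Real.rpow_mul hαpos.le]
    norm_num
  have hs_abs : X ≤ α ^ ((1:ℝ)/3) / 10 := by
    rw [hX_def, hs_def, abs_div, abs_of_pos hαpos, div_le_iff₀ hαpos]
    calc |(l:ℝ) - α^2| ≤ R α * α := hl
      _ ≤ (α ^ ((1:ℝ)/3) / 10) * α := mul_le_mul_of_nonneg_right hRα hαpos.le
  have hs3 : X^3 ≤ α/1000 := by
    calc X^3 ≤ (α ^ ((1:ℝ)/3) / 10)^3 := pow_le_pow_left₀ hXnn hs_abs 3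
      _ = (α ^ ((1:ℝ)/3))^(3:ℕ)/1000 := by ring
      _ = α/1000 := by rw [hcube]
  have hs9 : X^9 ≤ α^3/10^9 := by
    calc X^9 = (X^3)^3 := by ring
      _ ≤ (α/1000)^3 := pow_le_pow_left₀ (by positivity) hs3 3
      _ = α^3/10^9 := by ring
  have h13le : α ^ ((1:ℝ)/3) ≤ α := by
    nth_rewrite 2 [← Real.rpow_one α]
    exact Real.rpow_le_rpow_of_exponent_le (by linarith) (by norm_num)
  have hs1 : X ≤ α/10 := le_trans hs_abs (by linarith)
  have hlreal : (l:ℝ) = α^2 + s*α := by rw [hs_def]; field_simp; ring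
  have hsX1 : -(α/10) ≤ s ∧ s ≤ α/10 :=
    ⟨le_trans (neg_le_neg hs1) (neg_abs_le s), le_trans (le_abs_self s) hs1⟩
  have hl_lo : 9/10 * α^2 ≤ (l:ℝ) := by nlinarith [hsX1.1, hsX1.2]
  have hl_hi : (l:ℝ) ≤ 11/10 * α^2 := by nlinarith [hsX1.1, hsX1.2]
  have hα2 : (10000:ℝ) ≤ α^2 := by nlinarith
  have hlpos : (0:ℝ) < (l:ℝ) := by nlinarith
  have hl2 : 2 ≤ l := by
    have : (2:ℝ) ≤ (l:ℝ) := by nlinarith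
    exact_mod_cast this
  have hfacpos : (0:ℝ) < (Nat.factorial l : ℝ) := by
    exact_mod_cast l.factorial_pos
  -- Stirling error term
  set E : ℝ := Real.log (Nat.factorial l)
      - (((l:ℝ) + 1/2) * Real.log l - l + Real.log (2*π)/2 + 1/(12*(l:ℝ))) with hE_def
  have hEb : |E| ≤ 1/(8*(l:ℝ)^2) := stirling_log_bound hl2
  -- u and log expansion
  set u : ℝ := s/α with hu_def
  have hu_eq : |u| = X/α := by
    rw [hu_def, abs_div, abs_of_pos hαpos, hX_def]
  have hu_half : |u| ≤ 1/2 := by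
    rw [hu_eq, div_le_iff₀ hαpos]; linarith
  set ε : ℝ := Real.log (1+u) - (u - u^2/2 + u^3/3 - u^4/4) with hε_def
  have hεb : |ε| ≤ 2*X^5/α^5 := by
    calc |ε| ≤ 2*|u|^5 := log_taylor4 hu_half
      _ = 2*X^5/α^5 := by rw [hu_eq, div_pow]; ring
  -- the exponent T
  set T : ℝ := s*α + s^2/2 - ((l:ℝ)+1/2)*Real.log (1+u) - 1/(12*(l:ℝ)) - E with hT_def
  have hGpos : 0 < Real.exp (-s^2/2)/(Real.sqrt (2*Real.pi)*α) := by positivity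
  have hppos : 0 < Real.exp (-α^2) * α^(2*l) / (Nat.factorial l : ℝ) := by positivity
  have hlog1u : Real.log (1+u) = Real.log l - 2*Real.log α := by
    have h1u : (1:ℝ)+u = (l:ℝ)/α^2 := by
      rw [hu_def, hlreal]; field_simp
    rw [h1u, Real.log_div (ne_of_gt hlpos) (by positivity), Real.log_pow]
    push_cast; ring
  have hTeq : Real.log (Real.exp (-α^2) * α^(2*l) / (Nat.factorial l : ℝ))
      = Real.log (Real.exp (-s^2/2)/(Real.sqrt (2*Real.pi)*α)) + T := by
    rw [Real.log_div (by positivity) (ne_of_gt hfacpos),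
      Real.log_mul (Real.exp_ne_zero _) (by positivity), Real.log_exp, Real.log_pow,
      Real.log_div (Real.exp_ne_zero _) (by positivity), Real.log_exp,
      Real.log_mul (by positivity) (ne_of_gt hαpos),
      Real.log_sqrt (by positivity), hT_def, hlog1u, hE_def]
    push_cast
    linear_combination hlreal
  have hpG : Real.exp (-α^2) * α^(2*l) / (Nat.factorial l : ℝ)
      = Real.exp (-s^2/2)/(Real.sqrt (2*Real.pi)*α) * Real.exp T := by
    calc Real.exp (-α^2) * α^(2*l) / (Nat.factorial l : ℝ)
        = Real.exp (Real.log (Real.exp (-α^2) * α^(2*l) / (Nat.factorial l : ℝ))) :=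
          (Real.exp_log hppos).symm
      _ = Real.exp (Real.log (Real.exp (-s^2/2)/(Real.sqrt (2*Real.pi)*α)) + T) := by
          rw [hTeq]
      _ = Real.exp (Real.log (Real.exp (-s^2/2)/(Real.sqrt (2*Real.pi)*α))) * Real.exp T :=
          Real.exp_add _ _
      _ = Real.exp (-s^2/2)/(Real.sqrt (2*Real.pi)*α) * Real.exp T := by
          rw [Real.exp_log hGpos]
  rw [hpG, ← mul_sub, abs_mul, abs_of_pos hGpos]
  apply mul_le_mul_of_nonneg_left _ hGpos.le
  -- the remainder identity
  have hlne : α^2 + s*α ≠ 0 := by rw [← hlreal]; exact ne_of_gt hlpos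
  have hr_eq : T - ((s^3-3*s)/6/α + (-s^4/12 + s^2/4 - 1/12)/α^2)
      = (s^5/4 - s^3/6)/α^3 + s^4/(8*α^4) + s/(12*α*(l:ℝ)) - E - ((l:ℝ)+1/2)*ε := by
    have hlu : Real.log (1+u) = (u - u^2/2 + u^3/3 - u^4/4) + ε := by
      rw [hε_def]; ring
    rw [hT_def, hlu, hu_def, hlreal]
    have hsa : s + α ≠ 0 := (by linarith [hsX1.1] : 0 < s + α).ne'
    field_simp
    linear_combination (-2304*α^2) * mul_inv_cancel₀ hsa
  exact est_main α s X E ε T (l:ℝ) hX_def hα100 hs3 hs9 hs1 hl_lo hl_hi hEb hεb hr_eq
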